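/- arXiv:1810.07755 — 4 statements merged into one kernel-verified Lean document; each statement's English description precedes it below -/
import Mathlib

section
/- Let T be a flow on a set X, let P : X → ι be a map into a finite index type, let R > 1 and 0 < ε ≤ 1/5, and let x, y, z ∈ X. If I_R(x) and I_R(y) are (ε,P)-matchable and I_R(y) and I_R(z) are (ε,P)-matchable, then I_R(x) and I_R(z) are (5ε,P)-matchable. -/
open MeasureTheory Set

/-- An `(ε,P)`-matching from the orbit segment `I_R(x)` onto `I_R(y)`:
a measurable set `A ⊆ [0,R]` of measure `> (1-ε)R` together with a map
`ψ : A → [0,R]` which is bi-Lipschitz with constants `1-ε`, `1+ε`, whose image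
has measure `> (1-ε)R`, and which matches the `P`-labels along the orbits. -/
def IsMatching {X : Type*} {ι : Type*} (T : ℝ → X → X) (P : X → ι)
    (R ε : ℝ) (x y : X) (A : Set ℝ) (ψ : ℝ → ℝ) : Prop :=
  MeasurableSet A ∧ A ⊆ Set.Icc 0 R ∧
  volume A > ENNReal.ofReal ((1 - ε) * R) ∧
  (∀ t ∈ A, ψ t ∈ Set.Icc 0 R) ∧
  (∀ s ∈ A, ∀ t ∈ A, s ≤ t →
    (1 - ε) * (t - s) ≤ ψ t - ψ s ∧ ψ t - ψ s ≤ (1 + ε) * (t - s)) ∧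
  volume (ψ '' A) > ENNReal.ofReal ((1 - ε) * R) ∧
  (∀ t ∈ A, P (T t x) = P (T (ψ t) y))

/-- `I_R(x)` and `I_R(y)` are `(ε,P)`-matchable. -/
def Matchable {X : Type*} {ι : Type*} (T : ℝ → X → X) (P : X → ι)
    (R ε : ℝ) (x y : X) : Prop :=
  ∃ (A : Set ℝ) (ψ : ℝ → ℝ), IsMatching T P R ε x y A ψ

lemma lip_image_volume_le {f : ℝ → ℝ} {S : Set ℝ} {K : ℝ} (hK : 0 ≤ K)
    (h : ∀ s ∈ S, ∀ t ∈ S, |f t - f s| ≤ K * |t - s|) :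
    volume (f '' S) ≤ ENNReal.ofReal K * volume S := by
  have hl : LipschitzOnWith K.toNNReal f S := by
    apply LipschitzOnWith.of_dist_le_mul
    intro a ha b hb
    rw [Real.dist_eq, Real.dist_eq]
    simpa [Real.coe_toNNReal K hK] using h b hb a ha
  have := hl.hausdorffMeasure_image_le (d := 1) zero_le_one
  rw [MeasureTheory.hausdorffMeasure_real] at this
  simpa [ENNReal.ofReal, ENNReal.rpow_one] using this

lemma volume_le_of_antilip {f : ℝ → ℝ} {S : Set ℝ} {c : ℝ} (hc : 0 < c)
    (h : ∀ s ∈ S, ∀ t ∈ S, c * |t - s| ≤ |f t - f s|) :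
    volume S ≤ ENNReal.ofReal (1 / c) * volume (f '' S) := by
  classical
  set g : ℝ → ℝ := fun u => if hu : ∃ t ∈ S, f t = u then hu.choose else 0 with hg
  have hgmem : ∀ u ∈ f '' S, g u ∈ S ∧ f (g u) = u := by
    intro u hu
    obtain ⟨t, ht, rfl⟩ := hu
    have hex : ∃ t' ∈ S, f t' = f t := ⟨t, ht, rfl⟩
    simp only [hg, dif_pos hex]
    exact ⟨hex.choose_spec.1, hex.choose_spec.2⟩
  have hSsub : S ⊆ g '' (f '' S) := by
    intro t ht
    refine ⟨f t, ⟨t, ht, rfl⟩, ?_⟩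
    obtain ⟨ht', hft'⟩ := hgmem (f t) ⟨t, ht, rfl⟩
    by_contra hne
    have h1 := h (g (f t)) ht' t ht
    rw [hft'] at h1
    simp only [sub_self, abs_zero] at h1
    have : |t - g (f t)| = 0 :=
      le_antisymm (nonpos_of_mul_nonpos_right h1 hc |>.trans le_rfl) (abs_nonneg _)
    exact hne (by rw [abs_eq_zero, sub_eq_zero] at this; exact this.symm)
  calc volume S ≤ volume (g '' (f '' S)) := measure_mono hSsub
    _ ≤ ENNReal.ofReal (1 / c) * volume (f '' S) := by
        apply lip_image_volume_le (by positivity)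
        intro u hu v hv
        obtain ⟨hguS, hfgu⟩ := hgmem u hu
        obtain ⟨hgvS, hfgv⟩ := hgmem v hv
        have := h (g u) hguS (g v) hgvS
        rw [hfgu, hfgv] at this
        calc |g v - g u| = (1 / c) * (c * |g v - g u|) := by field_simp
          _ ≤ (1 / c) * |v - u| := by
              apply mul_le_mul_of_nonneg_left _ (by positivity)
              exact this

lemma abs_of_biLip {g : ℝ → ℝ} {S : Set ℝ} {ε : ℝ} (hε1 : ε < 1)
    (h : ∀ s ∈ S, ∀ t ∈ S, s ≤ t →
      (1 - ε) * (t - s) ≤ g t - g s ∧ g t - g s ≤ (1 + ε) * (t - s)) :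
    ∀ s ∈ S, ∀ t ∈ S, (1 - ε) * |t - s| ≤ |g t - g s| ∧ |g t - g s| ≤ (1 + ε) * |t - s| := by
  intro s hs t ht
  rcases le_total s t with hst | hst
  · obtain ⟨h1, h2⟩ := h s hs t ht hst
    have h0 : 0 ≤ g t - g s := le_trans (by nlinarith) h1
    rw [abs_of_nonneg (sub_nonneg.2 hst), abs_of_nonneg h0]
    exact ⟨h1, h2⟩
  · obtain ⟨h1, h2⟩ := h t ht s hs hst
    have h0 : 0 ≤ g s - g t := le_trans (by nlinarith) h1
    rw [abs_sub_comm t s, abs_sub_comm (g t) (g s),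
      abs_of_nonneg (sub_nonneg.2 hst), abs_of_nonneg h0]
    exact ⟨h1, h2⟩



/-- If `I_R(x)` and `I_R(y)` are `(ε,P)`-matchable and `I_R(y)` and `I_R(z)`
are `(ε,P)`-matchable, then `I_R(x)` and `I_R(z)` are `(5ε,P)`-matchable. -/
theorem matchable_trans {X ι : Type*} [Finite ι]
    (T : ℝ → X → X) (hT0 : ∀ x, T 0 x = x)
    (hTadd : ∀ s t x, T (s + t) x = T s (T t x))
    (P : X → ι) (R ε : ℝ) (hR : 1 < R) (hε : 0 < ε) (hε' : ε ≤ 1 / 5)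
    (x y z : X)
    (hxy : Matchable T P R ε x y) (hyz : Matchable T P R ε y z) :
    Matchable T P R (5 * ε) x z := by
  obtain ⟨A, ψ, hAm, hAsub, hAvol, hψmem, hψlip, hψim, hψlab⟩ := hxy
  obtain ⟨B, φ, hBm, hBsub, hBvol, hφmem, hφlip, hφim, hφlab⟩ := hyz
  have hR0 : (0:ℝ) < R := lt_trans one_pos hR
  have hε1 : ε < 1 := lt_of_le_of_lt hε' (by norm_num)
  have h1ε : (0:ℝ) < 1 - ε := by linarith
  have h15 : (0:ℝ) ≤ 1 - 5 * ε := by linarith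
  have hψabs := abs_of_biLip hε1 hψlip
  have hφabs := abs_of_biLip hε1 hφlip
  have hIccv : volume (Icc (0:ℝ) R) = ENNReal.ofReal R := by
    rw [Real.volume_Icc, sub_zero]
  have hfin : ∀ S : Set ℝ, S ⊆ Icc 0 R → volume S ≠ ⊤ := fun S hS =>
    ((measure_mono hS).trans_lt (by rw [hIccv]; exact ENNReal.ofReal_lt_top)).ne
  have hAfin := hfin A hAsub
  have hBfin := hfin B hBsub
  set δ : ℝ := ε * R / 2 with hδdef
  have hδ0 : 0 < δ := by positivity
  obtain ⟨K, hKA, hKcomp, hKv⟩ := hAm.exists_isCompact_lt_add hAfin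
    (ε := ENNReal.ofReal δ) (by simp [ENNReal.ofReal_eq_zero]; linarith)
  have hKfin := hfin K (hKA.trans hAsub)
  have hAK : volume (A \ K) < ENNReal.ofReal δ :=
    measure_diff_lt_of_lt_add hKcomp.measurableSet.nullMeasurableSet hKA hKfin hKv
  set C : Set ℝ := {t ∈ K | ψ t ∈ B} with hCdef
  set H : Set ℝ := toMeasurable volume (K \ C) with hHdef
  have hHm : MeasurableSet H := measurableSet_toMeasurable _ _
  set C' : Set ℝ := K \ H with hC'def
  have hC'm : MeasurableSet C' := hKcomp.measurableSet.diff hHm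
  have hC'K : C' ⊆ K := fun t ht => ht.1
  have hC'C : C' ⊆ C := by
    intro t ht
    by_contra hc
    exact ht.2 (subset_toMeasurable _ _ ⟨ht.1, hc⟩)
  have hC'A : C' ⊆ A := hC'K.trans hKA
  have hC'sub : C' ⊆ Icc 0 R := hC'A.trans hAsub
  -- bound on volume (K \ C), hence H
  have hIccB : volume (Icc 0 R \ B) ≤ ENNReal.ofReal (ε * R) := by
    rw [measure_diff hBsub hBm.nullMeasurableSet hBfin, hIccv]
    calc ENNReal.ofReal R - volume B
        ≤ ENNReal.ofReal R - ENNReal.ofReal ((1 - ε) * R) := tsub_le_tsub_left hBvol.le _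
      _ = ENNReal.ofReal (ε * R) := by
          rw [← ENNReal.ofReal_sub _ (by positivity)]; congr 1; ring
  have hKC : volume (K \ C) ≤ ENNReal.ofReal (5 / 4 * (ε * R)) := by
    have h1 := volume_le_of_antilip (f := ψ) (S := K \ C) h1ε
      (fun s hs t ht => (hψabs s (hKA hs.1) t (hKA ht.1)).1)
    have h2 : ψ '' (K \ C) ⊆ Icc 0 R \ B := by
      rintro u ⟨t, ht, rfl⟩
      exact ⟨hψmem t (hKA ht.1), fun hb => ht.2 ⟨ht.1, hb⟩⟩
    calc volume (K \ C) ≤ ENNReal.ofReal (1 / (1 - ε)) * volume (ψ '' (K \ C)) := h1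
      _ ≤ ENNReal.ofReal (1 / (1 - ε)) * ENNReal.ofReal (ε * R) :=
          mul_le_mul_right ((measure_mono h2).trans hIccB) _
      _ = ENNReal.ofReal (1 / (1 - ε) * (ε * R)) := (ENNReal.ofReal_mul (by positivity)).symm
      _ ≤ ENNReal.ofReal (5 / 4 * (ε * R)) := by
          apply ENNReal.ofReal_le_ofReal
          have h14 : 1 / (1 - ε) ≤ 5 / 4 := by rw [div_le_div_iff₀ h1ε (by norm_num)]; linarith
          exact mul_le_mul_of_nonneg_right h14 (by positivity)
  have hH : volume H ≤ ENNReal.ofReal (5 / 4 * (ε * R)) := by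
    rw [hHdef, measure_toMeasurable]; exact hKC
  have hHfin : volume H ≠ ⊤ := (hH.trans_lt ENNReal.ofReal_lt_top).ne
  -- volume of C'
  have hC'vol : ENNReal.ofReal ((1 - 5 * ε) * R) < volume C' := by
    have hKsub : volume K ≤ volume C' + volume H :=
      (measure_mono (fun t ht => by
        by_cases h : t ∈ H
        · exact Or.inr h
        · exact Or.inl ⟨ht, h⟩ : K ⊆ C' ∪ H)).trans (measure_union_le _ _)
    have key : ENNReal.ofReal ((1 - 5 * ε) * R) + (volume H + ENNReal.ofReal δ)
        < volume C' + (volume H + ENNReal.ofReal δ) := by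
      calc ENNReal.ofReal ((1 - 5 * ε) * R) + (volume H + ENNReal.ofReal δ)
          ≤ ENNReal.ofReal ((1 - 5 * ε) * R)
            + (ENNReal.ofReal (5 / 4 * (ε * R)) + ENNReal.ofReal δ) := by
            exact add_le_add_right (add_le_add_left hH _) _
        _ = ENNReal.ofReal ((1 - 5 * ε) * R + (5 / 4 * (ε * R) + δ)) := by
            rw [ENNReal.ofReal_add (by positivity) (by positivity),
              ENNReal.ofReal_add (by positivity) hδ0.le]
        _ ≤ ENNReal.ofReal ((1 - ε) * R) := by
            apply ENNReal.ofReal_le_ofReal; rw [hδdef]; nlinarith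
        _ < volume A := hAvol
        _ < volume K + ENNReal.ofReal δ := hKv
        _ ≤ volume C' + volume H + ENNReal.ofReal δ := add_le_add_left hKsub _
        _ = volume C' + (volume H + ENNReal.ofReal δ) := by rw [add_assoc]
    exact (ENNReal.add_lt_add_iff_right (by simp [hHfin])).mp key
  -- continuity and image of K
  have hψlipA : ∀ s ∈ A, ∀ t ∈ A, |ψ t - ψ s| ≤ (1 + ε) * |t - s| :=
    fun s hs t ht => (hψabs s hs t ht).2
  have hψcont : ContinuousOn ψ K := by
    refine LipschitzOnWith.continuousOn (K := (1 + ε).toNNReal) ?_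
    apply LipschitzOnWith.of_dist_le_mul
    intro a ha b hb
    rw [Real.dist_eq, Real.dist_eq]
    simpa [Real.coe_toNNReal (1 + ε) (by linarith)] using hψlipA b (hKA hb) a (hKA ha)
  have hψKcomp : IsCompact (ψ '' K) := hKcomp.image_of_continuousOn hψcont
  have hψKsub : ψ '' K ⊆ Icc 0 R := by
    rintro u ⟨t, ht, rfl⟩; exact hψmem t (hKA ht)
  have hψKfin := hfin _ hψKsub
  -- lower bound on volume (ψ '' K)
  have hAKim : volume (ψ '' (A \ K)) ≤ ENNReal.ofReal ((1 + ε) * δ) := by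
    calc volume (ψ '' (A \ K)) ≤ ENNReal.ofReal (1 + ε) * volume (A \ K) :=
        lip_image_volume_le (by linarith)
          (fun s hs t ht => hψlipA s hs.1 t ht.1)
      _ ≤ ENNReal.ofReal (1 + ε) * ENNReal.ofReal δ :=
          mul_le_mul_right hAK.le _
      _ = ENNReal.ofReal ((1 + ε) * δ) := (ENNReal.ofReal_mul (by linarith)).symm
  have hsplit : volume (ψ '' A) ≤ volume (ψ '' K) + volume (ψ '' (A \ K)) := by
    refine (measure_mono ?_).trans (measure_union_le _ _)
    rintro u ⟨t, ht, rfl⟩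
    by_cases h : t ∈ K
    · exact Or.inl ⟨t, h, rfl⟩
    · exact Or.inr ⟨t, ⟨ht, h⟩, rfl⟩
  have hψKlow : ENNReal.ofReal ((1 - ε) * R - (1 + ε) * δ) ≤ volume (ψ '' K) := by
    have h0 : (0:ℝ) ≤ (1 - ε) * R - (1 + ε) * δ := by rw [hδdef]; nlinarith
    have key : ENNReal.ofReal ((1 - ε) * R - (1 + ε) * δ) + ENNReal.ofReal ((1 + ε) * δ)
        ≤ volume (ψ '' K) + ENNReal.ofReal ((1 + ε) * δ) := by
      calc ENNReal.ofReal ((1 - ε) * R - (1 + ε) * δ) + ENNReal.ofReal ((1 + ε) * δ)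
          = ENNReal.ofReal ((1 - ε) * R) := by
            rw [← ENNReal.ofReal_add h0 (by positivity)]; congr 1; ring
        _ ≤ volume (ψ '' A) := hψim.le
        _ ≤ volume (ψ '' K) + volume (ψ '' (A \ K)) := hsplit
        _ ≤ volume (ψ '' K) + ENNReal.ofReal ((1 + ε) * δ) := add_le_add_right hAKim _
    exact (ENNReal.add_le_add_iff_right (by simp)).mp key
  have hIccK : volume (Icc 0 R \ ψ '' K) ≤ ENNReal.ofReal (ε * R + (1 + ε) * δ) := by
    have key : volume (Icc 0 R \ ψ '' K) + volume (ψ '' K)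
        ≤ ENNReal.ofReal (ε * R + (1 + ε) * δ) + volume (ψ '' K) := by
      calc volume (Icc 0 R \ ψ '' K) + volume (ψ '' K)
          = volume (Icc 0 R \ ψ '' K) + volume (Icc 0 R ∩ ψ '' K) := by
            rw [inter_eq_self_of_subset_right hψKsub]
        _ = volume (Icc (0:ℝ) R) := measure_diff_add_inter _ hψKcomp.measurableSet
        _ = ENNReal.ofReal R := hIccv
        _ = ENNReal.ofReal (ε * R + (1 + ε) * δ) + ENNReal.ofReal ((1 - ε) * R - (1 + ε) * δ) := by
            rw [← ENNReal.ofReal_add (by positivity) (by rw [hδdef]; nlinarith)]; congr 1; ring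
        _ ≤ ENNReal.ofReal (ε * R + (1 + ε) * δ) + volume (ψ '' K) := add_le_add_right hψKlow _
    exact (ENNReal.add_le_add_iff_right hψKfin).mp key
    -- the composed map
  refine ⟨C', φ ∘ ψ, hC'm, hC'sub, hC'vol, ?_, ?_, ?_, ?_⟩
  · intro t ht
    exact hφmem _ (hC'C ht).2
  · intro s hs t ht hst
    have hsA : s ∈ A := hC'A hs
    have htA : t ∈ A := hC'A ht
    have h1 := hψlip s hsA t htA hst
    have hts : 0 ≤ t - s := by linarith
    have hψle : ψ s ≤ ψ t := by nlinarith [h1.1]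
    have h2 := hφlip (ψ s) (hC'C hs).2 (ψ t) (hC'C ht).2 hψle
    constructor
    · calc (1 - 5 * ε) * (t - s) ≤ (1 - ε) * ((1 - ε) * (t - s)) := by nlinarith
        _ ≤ (1 - ε) * (ψ t - ψ s) := mul_le_mul_of_nonneg_left h1.1 h1ε.le
        _ ≤ φ (ψ t) - φ (ψ s) := h2.1
    · calc (φ ∘ ψ) t - (φ ∘ ψ) s ≤ (1 + ε) * (ψ t - ψ s) := h2.2
        _ ≤ (1 + ε) * ((1 + ε) * (t - s)) := mul_le_mul_of_nonneg_left h1.2 (by linarith)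
        _ ≤ (1 + 5 * ε) * (t - s) := by nlinarith
  · -- image volume
    have hBC' : B \ ψ '' C' ⊆ (Icc 0 R \ ψ '' K) ∪ ψ '' (K ∩ H) := by
      rintro u ⟨huB, hu⟩
      by_cases h : u ∈ ψ '' K
      · obtain ⟨t, htK, rfl⟩ := h
        refine Or.inr ⟨t, ⟨htK, ?_⟩, rfl⟩
        by_contra hHt
        exact hu ⟨t, ⟨htK, hHt⟩, rfl⟩
      · exact Or.inl ⟨hBsub huB, h⟩
    have hKH : volume (ψ '' (K ∩ H)) ≤ ENNReal.ofReal ((1 + ε) * (5 / 4 * (ε * R))) := by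
      calc volume (ψ '' (K ∩ H)) ≤ ENNReal.ofReal (1 + ε) * volume (K ∩ H) :=
          lip_image_volume_le (by linarith)
            (fun s hs t ht => hψlipA s (hKA hs.1) t (hKA ht.1))
        _ ≤ ENNReal.ofReal (1 + ε) * ENNReal.ofReal (5 / 4 * (ε * R)) :=
            mul_le_mul_right ((measure_mono inter_subset_right).trans hH) _
        _ = ENNReal.ofReal ((1 + ε) * (5 / 4 * (ε * R))) :=
            (ENNReal.ofReal_mul (by linarith)).symm
    have hBC'vol : volume (B \ ψ '' C')
        ≤ ENNReal.ofReal (ε * R + (1 + ε) * δ + (1 + ε) * (5 / 4 * (ε * R))) := by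
      calc volume (B \ ψ '' C') ≤ volume (Icc 0 R \ ψ '' K) + volume (ψ '' (K ∩ H)) :=
          (measure_mono hBC').trans (measure_union_le _ _)
        _ ≤ ENNReal.ofReal (ε * R + (1 + ε) * δ)
            + ENNReal.ofReal ((1 + ε) * (5 / 4 * (ε * R))) := add_le_add hIccK hKH
        _ = ENNReal.ofReal (ε * R + (1 + ε) * δ + (1 + ε) * (5 / 4 * (ε * R))) := by
            rw [← ENNReal.ofReal_add (by positivity) (by positivity)]
    set e : ℝ := (1 + ε) * (ε * R + (1 + ε) * δ + (1 + ε) * (5 / 4 * (ε * R))) with hedef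
    have hφB : volume (φ '' (B \ ψ '' C')) ≤ ENNReal.ofReal e := by
      calc volume (φ '' (B \ ψ '' C')) ≤ ENNReal.ofReal (1 + ε) * volume (B \ ψ '' C') :=
          lip_image_volume_le (by linarith)
            (fun s hs t ht => (hφabs s hs.1 t ht.1).2)
        _ ≤ ENNReal.ofReal (1 + ε)
            * ENNReal.ofReal (ε * R + (1 + ε) * δ + (1 + ε) * (5 / 4 * (ε * R))) :=
            mul_le_mul_right hBC'vol _
        _ = ENNReal.ofReal e := by
            rw [hedef, ← ENNReal.ofReal_mul (by linarith)]
    have hφBfin : volume (φ '' (B \ ψ '' C')) ≠ ⊤ := (hφB.trans_lt ENNReal.ofReal_lt_top).ne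
    have hsplit2 : volume (φ '' B) ≤ volume (φ '' (ψ '' C')) + volume (φ '' (B \ ψ '' C')) := by
      refine (measure_mono ?_).trans (measure_union_le _ _)
      rintro u ⟨v, hv, rfl⟩
      by_cases h : v ∈ ψ '' C'
      · exact Or.inl ⟨v, h, rfl⟩
      · exact Or.inr ⟨v, ⟨hv, h⟩, rfl⟩
    have key : ENNReal.ofReal ((1 - 5 * ε) * R) + volume (φ '' (B \ ψ '' C'))
        < volume (φ '' (ψ '' C')) + volume (φ '' (B \ ψ '' C')) := by
      calc ENNReal.ofReal ((1 - 5 * ε) * R) + volume (φ '' (B \ ψ '' C'))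
          ≤ ENNReal.ofReal ((1 - 5 * ε) * R) + ENNReal.ofReal e := add_le_add_right hφB _
        _ = ENNReal.ofReal ((1 - 5 * ε) * R + e) := by
            rw [← ENNReal.ofReal_add (by positivity) (by rw [hedef, hδdef]; positivity)]
        _ ≤ ENNReal.ofReal ((1 - ε) * R) := by
            apply ENNReal.ofReal_le_ofReal
            rw [hedef, hδdef]
            nlinarith [mul_pos hε hR0, mul_nonneg (mul_nonneg hε.le hR0.le) (sub_nonneg.2 hε'), mul_nonneg (mul_nonneg (mul_nonneg hε.le hε.le) hR0.le) (sub_nonneg.2 hε')]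
        _ < volume (φ '' B) := hφim
        _ ≤ volume (φ '' (ψ '' C')) + volume (φ '' (B \ ψ '' C')) := hsplit2
    have : ENNReal.ofReal ((1 - 5 * ε) * R) < volume (φ '' (ψ '' C')) :=
      (ENNReal.add_lt_add_iff_right hφBfin).mp key
    rwa [image_comp]
  · intro t ht
    rw [hψlab t (hC'A ht), hφlab (ψ t) (hC'C ht).2]
    rfl
end

section
/- Let T be a flow on a set X, let P : X → ι be a map into a finite index type, let R > 1 and 0 < ε < 1/2, and let x, y ∈ X. If I_R(x) and I_R(y) are (ε,P)-matchable, then I_R(y) and I_R(x) are (2ε,P)-matchable (the inverse of an (ε,P)-matching is a (2ε,P)-matching). -/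
open MeasureTheory Set
open scoped NNReal ENNReal

/-- A Lipschitz-on-`s` map on `ℝ` increases the Lebesgue measure of `s`
by at most the Lipschitz constant. -/
lemma volume_image_le_of_lipschitzOnWith {C : ℝ≥0} {f : ℝ → ℝ} {s : Set ℝ}
    (h : LipschitzOnWith C f s) : volume (f '' s) ≤ (C : ℝ≥0∞) * volume s := by
  have h1 := h.hausdorffMeasure_image_le (d := 1) zero_le_one
  rwa [MeasureTheory.hausdorffMeasure_real, ENNReal.rpow_one] at h1

/-- If `I_R(x)` and `I_R(y)` are `(ε,P)`-matchable, then `I_R(y)` and `I_R(x)`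
are `(2ε,P)`-matchable: the inverse of an `(ε,P)`-matching is a `(2ε,P)`-matching. -/
theorem matchable_symm {X ι : Type*} [Finite ι]
    (T : ℝ → X → X) (hT0 : ∀ x, T 0 x = x)
    (hTadd : ∀ s t x, T (s + t) x = T s (T t x))
    (P : X → ι) (R ε : ℝ) (hR : 1 < R) (hε : 0 < ε) (hε' : ε < 1 / 2)
    (x y : X) (hxy : Matchable T P R ε x y) :
    Matchable T P R (2 * ε) y x := by
  obtain ⟨A, ψ, hAm, hAsub, hAvol, hmap, hbil, himg, hlab⟩ := hxy
  have hR0 : (0:ℝ) < R := by linarith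
  have h1ε : (0:ℝ) < 1 - ε := by linarith
  -- strict monotonicity and injectivity of ψ on A
  have hmono : ∀ s ∈ A, ∀ t ∈ A, s < t → ψ s < ψ t := by
    intro s hs t ht hst
    have := (hbil s hs t ht hst.le).1
    nlinarith
  have hinj : Set.InjOn ψ A := by
    intro s hs t ht h
    rcases lt_trichotomy s t with h1 | h1 | h1
    · exact absurd h (ne_of_lt (hmono s hs t ht h1))
    · exact h1
    · exact absurd h.symm (ne_of_lt (hmono t ht s hs h1))
  -- ψ is Lipschitz on A
  have hlip : LipschitzOnWith (Real.toNNReal (1 + ε)) ψ A := by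
    rw [lipschitzOnWith_iff_dist_le_mul]
    intro s hs t ht
    rw [Real.dist_eq, Real.dist_eq, Real.coe_toNNReal _ (by linarith)]
    rcases le_total t s with h1 | h1
    · have h2 := hbil t ht s hs h1
      rw [abs_of_nonneg (by nlinarith), abs_of_nonneg (by linarith)]
      linarith [h2.2]
    · have h2 := hbil s hs t ht h1
      rw [abs_sub_comm, abs_sub_comm s t, abs_of_nonneg (by nlinarith),
        abs_of_nonneg (by linarith)]
      linarith [h2.2]
  -- choose a compact K ⊆ A of almost-full measure
  have hAfin : volume A ≠ ⊤ := by
    refine ne_top_of_le_ne_top ?_ (measure_mono hAsub)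
    simp [Real.volume_Icc]
  obtain ⟨K, hKA, hKc, hKvol⟩ := hAm.exists_isCompact_lt_add (μ := volume) hAfin
    (ε := volume A - ENNReal.ofReal ((1 - ε) * R)) (tsub_pos_of_lt hAvol).ne'
  have hKAvol : ENNReal.ofReal ((1 - ε) * R) < volume K := by
    by_contra hcon
    push_neg at hcon
    have h2 : volume K + (volume A - ENNReal.ofReal ((1 - ε) * R)) ≤ volume A :=
      calc volume K + (volume A - ENNReal.ofReal ((1 - ε) * R))
          ≤ ENNReal.ofReal ((1 - ε) * R) + (volume A - ENNReal.ofReal ((1 - ε) * R)) :=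
            add_le_add_left hcon _
        _ = volume A := add_tsub_cancel_of_le hAvol.le
    exact absurd hKvol (not_lt.2 h2)
  have hinjK : Set.InjOn ψ K := hinj.mono hKA
  set B : Set ℝ := ψ '' K with hB
  set φ : ℝ → ℝ := Function.invFunOn ψ K with hφ
  have hφmem : ∀ s ∈ B, φ s ∈ K := by
    rintro s ⟨a, ha, rfl⟩
    exact Function.invFunOn_mem ⟨a, ha, rfl⟩
  have hφeq : ∀ s ∈ B, ψ (φ s) = s := by
    rintro s ⟨a, ha, rfl⟩
    exact Function.invFunOn_eq ⟨a, ha, rfl⟩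
  have hφimg : φ '' B = K := hinjK.invFunOn_image Set.Subset.rfl
  have hBc : IsCompact B := hKc.image_of_continuousOn (hlip.mono hKA).continuousOn
  -- φ is Lipschitz on B with constant (1-ε)⁻¹
  have hφlip : LipschitzOnWith (Real.toNNReal ((1 - ε)⁻¹)) φ B := by
    rw [lipschitzOnWith_iff_dist_le_mul]
    intro s hs t ht
    rw [Real.dist_eq, Real.dist_eq, Real.coe_toNNReal _ (by positivity)]
    have has : φ s ∈ A := hKA (hφmem s hs)
    have hat : φ t ∈ A := hKA (hφmem t ht)
    rcases le_total (φ t) (φ s) with h1 | h1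
    · have h2 := (hbil _ hat _ has h1).1
      rw [hφeq s hs, hφeq t ht] at h2
      rw [abs_of_nonneg (by linarith), abs_of_nonneg (by nlinarith), inv_mul_eq_div,
        le_div_iff₀ h1ε]
      nlinarith
    · have h2 := (hbil _ has _ hat h1).1
      rw [hφeq s hs, hφeq t ht] at h2
      rw [abs_sub_comm, abs_sub_comm s t, abs_of_nonneg (by linarith),
        abs_of_nonneg (by nlinarith), inv_mul_eq_div, le_div_iff₀ h1ε]
      nlinarith
  -- measure of B
  have hKim : volume K ≤ (Real.toNNReal ((1 - ε)⁻¹) : ℝ≥0∞) * volume B := by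
    have := volume_image_le_of_lipschitzOnWith hφlip
    rwa [hφimg] at this
  have hcoe : ((Real.toNNReal ((1 - ε)⁻¹)) : ℝ≥0∞) = ENNReal.ofReal ((1 - ε)⁻¹) := rfl
  have hBvol : ENNReal.ofReal ((1 - 2 * ε) * R) < volume B := by
    have hkey : ENNReal.ofReal (1 - ε) * volume K ≤ volume B := by
      calc ENNReal.ofReal (1 - ε) * volume K
          ≤ ENNReal.ofReal (1 - ε) * (ENNReal.ofReal ((1 - ε)⁻¹) * volume B) := by
            rw [← hcoe]; exact mul_le_mul_right hKim _
        _ = (ENNReal.ofReal (1 - ε) * ENNReal.ofReal ((1 - ε)⁻¹)) * volume B := by ring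
        _ = volume B := by
            rw [← ENNReal.ofReal_mul h1ε.le, mul_inv_cancel₀ h1ε.ne', ENNReal.ofReal_one, one_mul]
    calc ENNReal.ofReal ((1 - 2 * ε) * R)
        ≤ ENNReal.ofReal ((1 - ε) * ((1 - ε) * R)) := by
          apply ENNReal.ofReal_le_ofReal
          nlinarith [mul_nonneg (mul_nonneg hε.le hε.le) hR0.le]
      _ = ENNReal.ofReal (1 - ε) * ENNReal.ofReal ((1 - ε) * R) := by
          rw [← ENNReal.ofReal_mul h1ε.le]
      _ < ENNReal.ofReal (1 - ε) * volume K := by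
          refine (ENNReal.mul_lt_mul_iff_right ?_ ?_).2 hKAvol
          · exact (ENNReal.ofReal_pos.2 h1ε).ne'
          · exact ENNReal.ofReal_ne_top
      _ ≤ volume B := hkey
  -- assemble the reverse matching
  refine ⟨B, φ, hBc.measurableSet, ?_, hBvol, ?_, ?_, ?_, ?_⟩
  · rintro s ⟨a, ha, rfl⟩
    exact hmap a (hKA ha)
  · intro t ht
    exact hAsub (hKA (hφmem t ht))
  · intro s hs t ht hst
    have has : φ s ∈ A := hKA (hφmem s hs)
    have hat : φ t ∈ A := hKA (hφmem t ht)
    have hab : φ s ≤ φ t := by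
      by_contra hcon
      push_neg at hcon
      have := hmono _ hat _ has hcon
      rw [hφeq s hs, hφeq t ht] at this
      linarith
    have h2 := hbil _ has _ hat hab
    rw [hφeq s hs, hφeq t ht] at h2
    constructor
    · nlinarith [h2.2]
    · nlinarith [h2.1]
  · rw [hφimg]
    refine lt_of_le_of_lt ?_ hKAvol
    apply ENNReal.ofReal_le_ofReal
    nlinarith
  · intro t ht
    have has : φ t ∈ A := hKA (hφmem t ht)
    have := hlab _ has
    rw [hφeq t ht] at this
    exact this.symm
end

section
/- Let (X, 𝓑, μ) be a probability space and T a flow on X such that the map (t, x) ↦ T_t x is jointly measurable, each T_t preserves μ, and T is ergodic in the sense that every measurable set S with T_t^{−1}(S) = S for all t ∈ ℝ satisfies μ(S) ∈ {0, 1}. Let ε > 0 and let V ⊆ X be measurable with μ(V) < ε/2. Then there exist a measurable set D ⊆ X with μ(D) > 1 − ε² and a number N > 0 such that for every y ∈ D and every R ≥ N, the Lebesgue measure of {t ∈ [0, R] : T_t y ∈ V} is at most εR/2. -/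
open MeasureTheory Set
open Filter
open scoped ENNReal NNReal

section Visit
variable {X : Type*} [MeasurableSpace X] (T : ℝ → X → X) (V : Set X)

/-- Time spent in `V` by the orbit of `y` during `[a,b]`. -/
noncomputable def visitTime (y : X) (a b : ℝ) : ℝ≥0∞ := volume {t : ℝ | t ∈ Set.Icc a b ∧ T t y ∈ V}

variable {T V}

theorem visitTime_measurable (hTjm : Measurable (fun p : ℝ × X => T p.1 p.2))
    (hV : MeasurableSet V) (a b : ℝ) : Measurable (fun y => visitTime T V y a b) := by
  have hs : MeasurableSet {p : ℝ × X | p.1 ∈ Set.Icc a b ∧ T p.1 p.2 ∈ V} :=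
    (measurable_fst measurableSet_Icc).inter (hTjm hV)
  have := measurable_measure_prodMk_right (μ := (volume : Measure ℝ)) hs
  convert this using 2 with y
  rfl

theorem visitTime_mono (y : X) {a b b' : ℝ} (h : b ≤ b') :
    visitTime T V y a b ≤ visitTime T V y a b' :=
  measure_mono fun t ht => ⟨⟨ht.1.1, ht.1.2.trans h⟩, ht.2⟩

theorem visitTime_le_length (y : X) (a b : ℝ) :
    visitTime T V y a b ≤ ENNReal.ofReal (b - a) := by
  calc visitTime T V y a b ≤ volume (Set.Icc a b) := measure_mono fun t ht => ht.1
  _ = ENNReal.ofReal (b - a) := Real.volume_Icc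

theorem visitTime_shift (hTadd : ∀ s t x, T (s + t) x = T s (T t x))
    (s a b : ℝ) (y : X) :
    visitTime T V (T s y) a b = visitTime T V y (a + s) (b + s) := by
  have hset : {t : ℝ | t ∈ Set.Icc a b ∧ T t (T s y) ∈ V}
      = (fun t : ℝ => t + s) ⁻¹' {u : ℝ | u ∈ Set.Icc (a + s) (b + s) ∧ T u y ∈ V} := by
    ext t
    simp only [Set.mem_setOf_eq, Set.mem_preimage, Set.mem_Icc]
    rw [← hTadd t s y]
    constructor
    · rintro ⟨⟨h1, h2⟩, h3⟩; exact ⟨⟨by linarith, by linarith⟩, h3⟩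
    · rintro ⟨⟨h1, h2⟩, h3⟩; exact ⟨⟨by linarith, by linarith⟩, h3⟩
  rw [visitTime, hset, measure_preimage_add_right, visitTime]

theorem visitTime_split (y : X) {a b c : ℝ} (hab : a ≤ b) (hbc : b ≤ c) :
    visitTime T V y a c ≤ visitTime T V y a b + visitTime T V y b c := by
  refine le_trans (measure_mono ?_) (measure_union_le _ _)
  rintro t ⟨⟨h1, h2⟩, h3⟩
  rcases le_total t b with h | h
  · exact Or.inl ⟨⟨h1, h⟩, h3⟩
  · exact Or.inr ⟨⟨h, h2⟩, h3⟩

theorem visitTime_le_sum (hTadd : ∀ s t x, T (s + t) x = T s (T t x)) (y : X) (n : ℕ) :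
    visitTime T V y 0 n ≤ ∑ k ∈ Finset.range n, visitTime T V (T k y) 0 1 := by
  induction n with
  | zero =>
    simp only [Nat.cast_zero, Finset.range_zero, Finset.sum_empty, visitTime, Set.Icc_self]
    have h0 : {t : ℝ | t ∈ ({0} : Set ℝ) ∧ T t y ∈ V} ⊆ {(0:ℝ)} := fun t ht => ht.1
    exact (measure_mono h0).trans (le_of_eq Real.volume_singleton)
  | succ n ih =>
    have h1 : visitTime T V y 0 (n + 1) ≤ visitTime T V y 0 n + visitTime T V y n (n + 1) :=
      visitTime_split y (by positivity) (by linarith)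
    have h2 : visitTime T V (T n y) 0 1 = visitTime T V y n (n + 1) := by
      rw [visitTime_shift hTadd]
      norm_num
      rw [add_comm]
    rw [Finset.sum_range_succ, Nat.cast_add, Nat.cast_one, h2]
    push_cast
    exact h1.trans (add_le_add_left ih _)

theorem visitTime_shift_le (hTadd : ∀ s t x, T (s + t) x = T s (T t x))
    (s : ℝ) (y : X) (n : ℕ) :
    visitTime T V (T s y) 0 n ≤ visitTime T V y 0 n + ENNReal.ofReal (2 * |s|) := by
  rw [visitTime_shift hTadd, zero_add]
  have hsub : {t : ℝ | t ∈ Set.Icc s ((n : ℝ) + s) ∧ T t y ∈ V}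
      ⊆ ({t : ℝ | t ∈ Set.Icc (-|s|) 0 ∧ T t y ∈ V} ∪ {t : ℝ | t ∈ Set.Icc 0 (n : ℝ) ∧ T t y ∈ V})
        ∪ {t : ℝ | t ∈ Set.Icc (n : ℝ) ((n : ℝ) + |s|) ∧ T t y ∈ V} := by
    rintro t ⟨⟨h1, h2⟩, h3⟩
    have habs : -|s| ≤ s := neg_abs_le s
    have habs' : s ≤ |s| := le_abs_self s
    rcases le_total t 0 with h | h
    · exact Or.inl (Or.inl ⟨⟨by linarith, h⟩, h3⟩)
    · rcases le_total t (n : ℝ) with h' | h'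
      · exact Or.inl (Or.inr ⟨⟨h, h'⟩, h3⟩)
      · exact Or.inr ⟨⟨h', by linarith⟩, h3⟩
  calc volume {t : ℝ | t ∈ Set.Icc s ((n : ℝ) + s) ∧ T t y ∈ V}
      ≤ volume ({t : ℝ | t ∈ Set.Icc (-|s|) 0 ∧ T t y ∈ V}
          ∪ {t : ℝ | t ∈ Set.Icc 0 (n : ℝ) ∧ T t y ∈ V})
        + volume {t : ℝ | t ∈ Set.Icc (n : ℝ) ((n : ℝ) + |s|) ∧ T t y ∈ V} :=
        (measure_mono hsub).trans (measure_union_le _ _)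
    _ ≤ (volume {t : ℝ | t ∈ Set.Icc (-|s|) 0 ∧ T t y ∈ V}
          + volume {t : ℝ | t ∈ Set.Icc 0 (n : ℝ) ∧ T t y ∈ V})
        + volume {t : ℝ | t ∈ Set.Icc (n : ℝ) ((n : ℝ) + |s|) ∧ T t y ∈ V} :=
        add_le_add_left (measure_union_le _ _) _
    _ ≤ (ENNReal.ofReal (0 - -|s|) + visitTime T V y 0 n) + ENNReal.ofReal ((n + |s|) - n) := by
        refine add_le_add (add_le_add (visitTime_le_length y _ _) le_rfl)
          (visitTime_le_length y _ _)
    _ = visitTime T V y 0 n + ENNReal.ofReal (2 * |s|) := by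
        rw [zero_sub, neg_neg, add_sub_cancel_left]
        rw [add_comm (ENNReal.ofReal |s|), add_assoc, ← ENNReal.ofReal_add (abs_nonneg s) (abs_nonneg s)]
        ring_nf

end Visit

theorem ennreal_limsup_add_const (u : ℕ → ℝ≥0∞) (c : ℝ≥0∞) :
    limsup (fun n => u n + c) atTop ≤ limsup u atTop + c := by
  calc limsup (fun n => u n + c) atTop = ⨅ n, ⨆ i ≥ n, (u i + c) :=
        limsup_eq_iInf_iSup_of_nat
    _ ≤ ⨅ n, ((⨆ i ≥ n, u i) + c) :=
        iInf_mono fun n => iSup₂_le fun i hi =>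
          add_le_add_left (le_iSup₂ (f := fun i (_ : i ≥ n) => u i) i hi) c
    _ = (⨅ n, ⨆ i ≥ n, u i) + c := (ENNReal.iInf_add).symm
    _ = limsup u atTop + c := by rw [limsup_eq_iInf_iSup_of_nat]

theorem ennreal_limsup_le_of_le_add_div {u v : ℕ → ℝ≥0∞} {c : ℝ≥0∞} (hc : c ≠ ⊤)
    (h : ∀ n : ℕ, u n ≤ v n + c / n) :
    limsup u atTop ≤ limsup v atTop := by
  refine ENNReal.le_of_forall_pos_le_add fun ε hε _ => ?_
  have hε0 : (ε : ℝ≥0∞) ≠ 0 := by exact_mod_cast hε.ne'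
  obtain ⟨n₀, hn₀⟩ := ENNReal.exists_nat_gt (ENNReal.div_lt_top hc hε0).ne
  have key : ∀ n : ℕ, n₀ ≤ n → c / n ≤ (ε : ℝ≥0∞) := by
    intro n hn
    have h1 : c / (ε : ℝ≥0∞) < (n : ℝ≥0∞) := lt_of_lt_of_le hn₀ (by exact_mod_cast hn)
    have h2 : c < (n : ℝ≥0∞) * ε :=
      (ENNReal.div_lt_iff (Or.inl hε0) (Or.inl ENNReal.coe_ne_top)).mp h1
    exact ENNReal.div_le_of_le_mul (le_of_lt (by rwa [mul_comm] at h2))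
  calc limsup u atTop ≤ limsup (fun n => v n + (ε : ℝ≥0∞)) atTop := by
        refine limsup_le_limsup ?_
        filter_upwards [eventually_ge_atTop n₀] with n hn
        exact (h n).trans (add_le_add_right (key n hn) _)
    _ ≤ limsup v atTop + ε := ennreal_limsup_add_const v _

section Orbit
variable {X : Type*} [MeasurableSpace X] {T : ℝ → X → X} {V : Set X}

/-- The asymptotic upper density of visit times. -/
noncomputable def orbitLimsup (T : ℝ → X → X) (V : Set X) (y : X) : ℝ≥0∞ :=
  limsup (fun n : ℕ => visitTime T V y 0 n / n) atTop

theorem orbitLimsup_measurable (hTjm : Measurable (fun p : ℝ × X => T p.1 p.2))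
    (hV : MeasurableSet V) : Measurable (orbitLimsup T V) :=
  Measurable.limsup fun n => (visitTime_measurable hTjm hV 0 n).div_const _

theorem orbitLimsup_comp (hT0 : ∀ x, T 0 x = x)
    (hTadd : ∀ s t x, T (s + t) x = T s (T t x)) (s : ℝ) (y : X) :
    orbitLimsup T V (T s y) = orbitLimsup T V y := by
  have key : ∀ (s : ℝ) (y : X), orbitLimsup T V (T s y) ≤ orbitLimsup T V y := by
    intro s y
    refine ennreal_limsup_le_of_le_add_div (c := ENNReal.ofReal (2 * |s|))
      ENNReal.ofReal_ne_top fun n => ?_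
    calc visitTime T V (T s y) 0 n / n
        ≤ (visitTime T V y 0 n + ENNReal.ofReal (2 * |s|)) / n :=
          ENNReal.div_le_div_right (visitTime_shift_le hTadd s y n) _
      _ = visitTime T V y 0 n / n + ENNReal.ofReal (2 * |s|) / n := ENNReal.add_div
  refine le_antisymm (key s y) ?_
  have h2 := key (-s) (T s y)
  rw [← hTadd (-s) s y, show (-s + s : ℝ) = 0 by ring, hT0 y] at h2
  exact h2

theorem iterate_time_one (hT0 : ∀ x, T 0 x = x)
    (hTadd : ∀ s t x, T (s + t) x = T s (T t x)) (k : ℕ) (y : X) :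
    (T 1)^[k] y = T k y := by
  induction k with
  | zero => simp [hT0]
  | succ k ih =>
    rw [Function.iterate_succ_apply', ih, ← hTadd 1 k y]
    norm_num
    rw [add_comm]

end Orbit

theorem hopf_maximal {X : Type*} [MeasurableSpace X] (μ : Measure X) [IsProbabilityMeasure μ]
    (φ : X → X) (hφ : MeasurePreserving φ μ μ)
    (f : X → ℝ) (hfm : Measurable f) (hfi : Integrable f μ) :
    ∃ E : Set X, MeasurableSet E ∧
      (∀ y (n : ℕ), 0 < ∑ k ∈ Finset.range n, f (φ^[k] y) → y ∈ E) ∧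
      0 ≤ ∫ y in E, f y ∂μ := by
  set S : ℕ → X → ℝ := fun n y => ∑ k ∈ Finset.range n, f (φ^[k] y) with hS
  have hSm : ∀ n, Measurable (S n) := by
    intro n
    exact Finset.measurable_sum _ fun k _ => hfm.comp (hφ.measurable.iterate k)
  have hSi : ∀ n, Integrable (S n) μ := by
    intro n
    exact integrable_finset_sum _ fun k _ => ((hφ.iterate k).integrable_comp hfm.aestronglyMeasurable).mpr hfi
  have hSrec : ∀ n y, S (n + 1) y = f y + S n (φ y) := by
    intro n y
    simp only [hS]
    rw [Finset.sum_range_succ']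
    simp [Function.iterate_succ_apply, add_comm]
  -- the running maxima
  let M : ℕ → X → ℝ := fun N => Nat.rec (fun _ => (0 : ℝ)) (fun n Mn y => max (Mn y) (S (n + 1) y)) N
  have hM0 : ∀ y, M 0 y = 0 := fun _ => rfl
  have hMsucc : ∀ N y, M (N + 1) y = max (M N y) (S (N + 1) y) := fun _ _ => rfl
  have hMnonneg : ∀ N y, 0 ≤ M N y := by
    intro N y
    induction N with
    | zero => simp [hM0]
    | succ n ih => rw [hMsucc]; exact le_max_of_le_left ih
  have hMmono : ∀ N y, M N y ≤ M (N + 1) y := by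
    intro N y; rw [hMsucc]; exact le_max_left _ _
  have hMm : ∀ N, Measurable (M N) := by
    intro N
    induction N with
    | zero => exact measurable_const
    | succ n ih => exact ih.max (hSm (n + 1))
  have hMi : ∀ N, Integrable (M N) μ := by
    intro N
    induction N with
    | zero => exact integrable_const 0
    | succ n ih =>
      have := ih.sup (hSi (n + 1))
      simpa [Pi.sup_def] using this
  have hSM : ∀ N n y, n ≤ N → S n y ≤ M N y := by
    intro N
    induction N with
    | zero =>
      intro n y hn
      interval_cases n
      simp [hS, hM0]
    | succ N ih =>
      intro n y hn
      rcases Nat.lt_or_ge n (N + 1) with h | h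
      · exact (ih n y (Nat.lt_succ_iff.mp h)).trans (hMmono N y)
      · have : n = N + 1 := le_antisymm hn h
        subst this
        rw [hMsucc]; exact le_max_right _ _
  have hrec : ∀ N y, 0 < M N y → M N y ≤ f y + M N (φ y) := by
    intro N
    induction N with
    | zero => intro y hy; rw [hM0] at hy; exact absurd hy (lt_irrefl 0)
    | succ N ih =>
      intro y hy
      rcases le_total (M N y) (S (N + 1) y) with h | h
      · rw [hMsucc, max_eq_right h, hSrec]
        exact add_le_add_right (hSM (N + 1) N (φ y) (Nat.le_succ N)) _
      · rw [hMsucc, max_eq_left h] at hy ⊢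
        exact (ih y hy).trans (add_le_add_right (hMmono N (φ y)) _)
  set E : ℕ → Set X := fun N => {y | 0 < M N y} with hE
  have hEm : ∀ N, MeasurableSet (E N) := fun N => measurableSet_lt measurable_const (hMm N)
  refine ⟨⋃ N, E N, MeasurableSet.iUnion hEm, ?_, ?_⟩
  · intro y n hn
    exact mem_iUnion.mpr ⟨n, lt_of_lt_of_le hn (hSM n n y le_rfl)⟩
  · -- the integral over each E N is nonneg
    have key : ∀ N, 0 ≤ ∫ y in E N, f y ∂μ := by
      intro N
      have hMφi : Integrable (fun y => M N (φ y)) μ :=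
        (hφ.integrable_comp (hMm N).aestronglyMeasurable).mpr (hMi N)
      have step1 : ∫ y in E N, (M N y - M N (φ y)) ∂μ ≤ ∫ y in E N, f y ∂μ := by
        apply setIntegral_mono_on (((hMi N).sub hMφi).restrict) (hfi.restrict) (hEm N)
        intro y hy
        have := hrec N y hy
        simp only [Pi.sub_apply]
        linarith
      have step2 : ∫ y in E N, (M N y - M N (φ y)) ∂μ
          = ∫ y in E N, M N y ∂μ - ∫ y in E N, M N (φ y) ∂μ :=
        integral_sub ((hMi N).restrict) (hMφi.restrict)
      have step3 : ∫ y in E N, M N y ∂μ = ∫ y, M N y ∂μ := by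
        rw [← integral_add_compl (hEm N) (hMi N)]
        have : ∫ y in (E N)ᶜ, M N y ∂μ = 0 := by
          apply setIntegral_eq_zero_of_forall_eq_zero
          intro y hy
          have : ¬ 0 < M N y := hy
          linarith [hMnonneg N y]
        rw [this, add_zero]
      have step4 : ∫ y in E N, M N (φ y) ∂μ ≤ ∫ y, M N (φ y) ∂μ :=
        setIntegral_le_integral hMφi (Eventually.of_forall fun y => hMnonneg N (φ y))
      have step5 : ∫ y, M N (φ y) ∂μ = ∫ y, M N y ∂μ := by
        rw [← hφ.map_eq, integral_map hφ.measurable.aemeasurable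
          ((hMm N).aestronglyMeasurable)]
        rw [hφ.map_eq]
      nlinarith [step1, step2, step3, step4, step5]
    have hmono : Monotone E := by
      intro a b hab y hy
      have : ∀ k, M a y ≤ M (a + k) y := by
        intro k; induction k with
        | zero => simp
        | succ k ih => exact ih.trans (hMmono (a + k) y)
      have h2 := this (b - a)
      rw [Nat.add_sub_cancel' hab] at h2
      exact lt_of_lt_of_le hy h2
    have := tendsto_setIntegral_of_monotone hEm hmono hfi.integrableOn
    exact ge_of_tendsto this (Eventually.of_forall key)

theorem lintegral_visitTime_one {X : Type*} [MeasurableSpace X]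
    (μ : Measure X) [IsProbabilityMeasure μ] {T : ℝ → X → X} {V : Set X}
    (hTjm : Measurable (fun p : ℝ × X => T p.1 p.2))
    (hTpres : ∀ t : ℝ, MeasurePreserving (T t) μ μ) (hV : MeasurableSet V) :
    ∫⁻ y, visitTime T V y 0 1 ∂μ = μ V := by
  set s₁ : Set (ℝ × X) := {p : ℝ × X | p.1 ∈ Set.Icc (0:ℝ) 1 ∧ T p.1 p.2 ∈ V} with hs₁def
  have hs₁ : MeasurableSet s₁ := (measurable_fst measurableSet_Icc).inter (hTjm hV)
  have h1 : ∀ y, visitTime T V y 0 1 = volume ((fun t : ℝ => (t, y)) ⁻¹' s₁) := by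
    intro y; rfl
  calc ∫⁻ y, visitTime T V y 0 1 ∂μ
      = ∫⁻ y, volume ((fun t : ℝ => (t, y)) ⁻¹' s₁) ∂μ := by simp_rw [h1]
    _ = (volume.prod μ) s₁ := (Measure.prod_apply_symm hs₁).symm
    _ = ∫⁻ t, μ (Prod.mk t ⁻¹' s₁) ∂volume := Measure.prod_apply hs₁
    _ = ∫⁻ t, (Set.Icc (0:ℝ) 1).indicator (fun _ => μ V) t ∂volume := by
        refine lintegral_congr fun t => ?_
        by_cases ht : t ∈ Set.Icc (0:ℝ) 1
        · rw [Set.indicator_of_mem ht]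
          have : Prod.mk t ⁻¹' s₁ = T t ⁻¹' V := by
            ext x
            simp only [hs₁def, Set.mem_preimage, Set.mem_setOf_eq]
            exact ⟨fun h => h.2, fun h => ⟨ht, h⟩⟩
          rw [this, (hTpres t).measure_preimage hV.nullMeasurableSet]
        · rw [Set.indicator_of_notMem ht]
          have : Prod.mk t ⁻¹' s₁ = ∅ := by
            ext x
            simp only [hs₁def, Set.mem_preimage, Set.mem_setOf_eq,
              Set.mem_empty_iff_false, iff_false, not_and]
            exact fun h => absurd h ht
          rw [this, measure_empty]
    _ = μ V := by
        rw [lintegral_indicator measurableSet_Icc, setLIntegral_const, Real.volume_Icc]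
        norm_num

theorem orbitLimsup_gt_null {X : Type*} [MeasurableSpace X]
    (μ : Measure X) [IsProbabilityMeasure μ] {T : ℝ → X → X} {V : Set X}
    (hT0 : ∀ x, T 0 x = x)
    (hTadd : ∀ s t x, T (s + t) x = T s (T t x))
    (hTjm : Measurable (fun p : ℝ × X => T p.1 p.2))
    (hTpres : ∀ t : ℝ, MeasurePreserving (T t) μ μ)
    (herg : ∀ S : Set X, MeasurableSet S → (∀ t : ℝ, T t ⁻¹' S = S) →
      μ S = 0 ∨ μ S = 1)
    (hV : MeasurableSet V) {lam : ℝ} (hlam0 : 0 < lam)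
    (hlamV : (μ V).toReal < lam) :
    μ {y | ENNReal.ofReal lam < orbitLimsup T V y} = 0 := by
  set L := {y | ENNReal.ofReal lam < orbitLimsup T V y} with hLdef
  have hLm : MeasurableSet L :=
    measurableSet_lt measurable_const (orbitLimsup_measurable hTjm hV)
  have hLinv : ∀ t : ℝ, T t ⁻¹' L = L := by
    intro t
    ext y
    simp only [hLdef, Set.mem_preimage, Set.mem_setOf_eq,
      orbitLimsup_comp hT0 hTadd t y]
  -- the function g and f = g - lam
  set g : X → ℝ := fun y => (visitTime T V y 0 1).toReal with hgdef
  have hvis_le_one : ∀ y, visitTime T V y 0 1 ≤ 1 := by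
    intro y
    have := visitTime_le_length (T := T) (V := V) y 0 1
    simpa using this
  have hvis_ne_top : ∀ y, visitTime T V y 0 1 ≠ ⊤ :=
    fun y => ((hvis_le_one y).trans_lt ENNReal.one_lt_top).ne
  have hgm : Measurable g := (visitTime_measurable hTjm hV 0 1).ennreal_toReal
  have hg0 : ∀ y, 0 ≤ g y := fun y => ENNReal.toReal_nonneg
  have hg1 : ∀ y, g y ≤ 1 := by
    intro y
    have := ENNReal.toReal_le_toReal (hvis_ne_top y) ENNReal.one_ne_top
    simpa [hgdef] using this.mpr (hvis_le_one y)
  have hgi : Integrable g μ := by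
    refine (integrable_const (1:ℝ)).mono' hgm.aestronglyMeasurable ?_
    filter_upwards with y
    rw [Real.norm_eq_abs, abs_of_nonneg (hg0 y)]
    exact hg1 y
  have hgint : ∫ y, g y ∂μ = (μ V).toReal := by
    rw [hgdef]
    rw [integral_toReal (visitTime_measurable hTjm hV 0 1).aemeasurable
      (Filter.Eventually.of_forall fun y => (hvis_le_one y).trans_lt ENNReal.one_lt_top)]
    rw [lintegral_visitTime_one μ hTjm hTpres hV]
  set f : X → ℝ := fun y => g y - lam with hfdef
  obtain ⟨E, hEm, hEmem, hEint⟩ := hopf_maximal μ (T 1) (hTpres 1) f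
    (hgm.sub measurable_const) (hgi.sub (integrable_const lam))
  -- L ⊆ E
  have hLE : L ⊆ E := by
    intro y hy
    have hfreq : ∃ᶠ n : ℕ in atTop, ENNReal.ofReal lam < visitTime T V y 0 n / n :=
      frequently_lt_of_lt_limsup (by isBoundedDefault) hy
    obtain ⟨n, hnlt, hn1⟩ := (hfreq.and_eventually (eventually_ge_atTop 1)).exists
    have hnne : (n : ℝ≥0∞) ≠ 0 := by exact_mod_cast Nat.one_le_iff_ne_zero.mp hn1
    have hmul : ENNReal.ofReal lam * n < visitTime T V y 0 n :=
      (ENNReal.lt_div_iff_mul_lt (Or.inl hnne) (Or.inl (ENNReal.natCast_ne_top n))).mp hnlt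
    -- finiteness
    have hfin : visitTime T V y 0 n ≠ ⊤ :=
      ((visitTime_le_length y 0 n).trans_lt ENNReal.ofReal_lt_top).ne
    have hofn : ENNReal.ofReal lam * (n : ℝ≥0∞) = ENNReal.ofReal (lam * n) := by
      rw [ENNReal.ofReal_mul hlam0.le, ENNReal.ofReal_natCast]
    have hreal : lam * n < (visitTime T V y 0 n).toReal := by
      rw [hofn] at hmul
      exact (ENNReal.ofReal_lt_iff_lt_toReal (by positivity) hfin).mp hmul
    -- sum bound
    have hsum := visitTime_le_sum (V := V) hTadd y n
    have hsumfin : ∀ k ∈ Finset.range n, visitTime T V (T k y) 0 1 ≠ ⊤ :=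
      fun k _ => hvis_ne_top _
    have hsumfin' : ∑ k ∈ Finset.range n, visitTime T V (T k y) 0 1 ≠ ⊤ :=
      (ENNReal.sum_lt_top.mpr (fun k hk => (hsumfin k hk).lt_top)).ne
    have hsumreal : (visitTime T V y 0 n).toReal
        ≤ ∑ k ∈ Finset.range n, (visitTime T V (T k y) 0 1).toReal := by
      rw [← ENNReal.toReal_sum hsumfin]
      exact (ENNReal.toReal_le_toReal hfin hsumfin').mpr hsum
    refine hEmem y n ?_
    have hsplit : ∑ k ∈ Finset.range n, f ((T 1)^[k] y)
        = (∑ k ∈ Finset.range n, (visitTime T V (T k y) 0 1).toReal) - n * lam := by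
      rw [hfdef]
      simp only [iterate_time_one hT0 hTadd]
      rw [Finset.sum_sub_distrib, Finset.sum_const, Finset.card_range, nsmul_eq_mul]
    rw [hsplit]
    have : lam * n ≤ ∑ k ∈ Finset.range n, (visitTime T V (T k y) 0 1).toReal :=
      le_trans hreal.le hsumreal
    nlinarith [hreal, hsumreal]
  -- μ E < 1
  have hElt : μ E < 1 := by
    have h1 : ∫ y in E, f y ∂μ = ∫ y in E, g y ∂μ - (μ E).toReal * lam := by
      rw [hfdef]
      rw [integral_sub hgi.restrict (integrable_const lam).restrict, setIntegral_const,
        smul_eq_mul]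
      rfl
    have h2 : ∫ y in E, g y ∂μ ≤ ∫ y, g y ∂μ :=
      setIntegral_le_integral hgi (Filter.Eventually.of_forall hg0)
    have h3 : (μ E).toReal * lam ≤ (μ V).toReal := by
      rw [h1] at hEint
      linarith [hgint ▸ h2]
    have h4 : (μ E).toReal < 1 := by
      by_contra h
      push_neg at h
      nlinarith [ENNReal.toReal_nonneg (a := μ V)]
    rw [← ENNReal.toReal_lt_toReal (measure_ne_top μ E) ENNReal.one_ne_top, ENNReal.toReal_one]
    exact h4
  rcases herg L hLm hLinv with h | h
  · exact h
  · exfalso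
    have hmono : μ L ≤ μ E := measure_mono hLE
    rw [h] at hmono
    exact absurd (hmono.trans_lt hElt) (lt_irrefl 1)


/-- Uniform visit-time bound from the ergodic theorem: for an ergodic
measure-preserving flow `T` on a probability space and a measurable set `V`
with `μ(V) < ε/2`, there is a set `D` of measure `> 1 - ε²` and a time `N > 0`
such that for every `y ∈ D` and `R ≥ N`, the time spent in `V` along
`[0,R]` is at most `εR/2`. -/
theorem uniform_visit_time_bound {X : Type*} [MeasurableSpace X]
    (μ : Measure X) [IsProbabilityMeasure μ]
    (T : ℝ → X → X)
    (hT0 : ∀ x, T 0 x = x)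
    (hTadd : ∀ s t x, T (s + t) x = T s (T t x))
    (hTjm : Measurable (fun p : ℝ × X => T p.1 p.2))
    (hTpres : ∀ t : ℝ, MeasurePreserving (T t) μ μ)
    (herg : ∀ S : Set X, MeasurableSet S → (∀ t : ℝ, T t ⁻¹' S = S) →
      μ S = 0 ∨ μ S = 1)
    (ε : ℝ) (hε : 0 < ε)
    (V : Set X) (hV : MeasurableSet V) (hVsmall : μ V < ENNReal.ofReal (ε / 2)) :
    ∃ (D : Set X) (N : ℝ), MeasurableSet D ∧
      ENNReal.ofReal (1 - ε ^ 2) < μ D ∧ 0 < N ∧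
      ∀ y ∈ D, ∀ R : ℝ, N ≤ R →
        volume {t : ℝ | t ∈ Set.Icc 0 R ∧ T t y ∈ V} ≤
          ENNReal.ofReal (ε * R / 2) := by
  have hv : (μ V).toReal < ε / 2 := ENNReal.toReal_lt_of_lt_ofReal hVsmall
  have hv0 : 0 ≤ (μ V).toReal := ENNReal.toReal_nonneg
  set lam : ℝ := ((μ V).toReal + ε / 2) / 2 with hlamdef
  have hlam0 : 0 < lam := by rw [hlamdef]; linarith
  have hvlam : (μ V).toReal < lam := by rw [hlamdef]; linarith
  have hlamε : lam < ε / 2 := by rw [hlamdef]; linarith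
  set lam' : ℝ := (lam + ε / 2) / 2 with hlam'def
  have hlam'1 : lam < lam' := by rw [hlam'def]; linarith
  have hlam'2 : lam' < ε / 2 := by rw [hlam'def]; linarith
  have hlam'0 : 0 < lam' := hlam0.trans hlam'1
  have hnull := orbitLimsup_gt_null μ hT0 hTadd hTjm hTpres herg hV hlam0 hvlam
  -- bad sets
  set Bad : ℕ → Set X := fun N =>
    {y | ∃ q : ℚ, (N : ℝ) ≤ (q : ℝ) ∧
      ENNReal.ofReal (ε * q / 2) < visitTime T V y 0 q} with hBaddef
  have hBadm : ∀ N, MeasurableSet (Bad N) := by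
    intro N
    have : Bad N = ⋃ q : ℚ, {y | (N : ℝ) ≤ (q : ℝ) ∧
        ENNReal.ofReal (ε * q / 2) < visitTime T V y 0 q} := by
      ext y; simp [hBaddef, Set.mem_iUnion]
    rw [this]
    refine MeasurableSet.iUnion fun q => ?_
    by_cases h : (N : ℝ) ≤ (q : ℝ)
    · simp only [h, true_and]
      exact measurableSet_lt measurable_const (visitTime_measurable hTjm hV 0 q)
    · simp only [h, false_and, Set.setOf_false]
      exact MeasurableSet.empty
  have hBadAnti : Antitone Bad := by
    intro a b hab y hy
    obtain ⟨q, hq1, hq2⟩ := hy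
    exact ⟨q, le_trans (by exact_mod_cast hab) hq1, hq2⟩
  -- the intersection is contained in the limsup bad set
  have hInter : (⋂ n, Bad n) ⊆ {y | ENNReal.ofReal lam < orbitLimsup T V y} := by
    intro y hy
    simp only [Set.mem_setOf_eq]
    have hfreq : ∃ᶠ n : ℕ in atTop, ENNReal.ofReal lam' ≤ visitTime T V y 0 n / n := by
      rw [frequently_atTop]
      intro m
      -- choose n₁ making ε(n-1)/2 ≥ lam' n
      set c₀ : ℝ := (ε / 2) / (ε / 2 - lam') with hc₀def
      have hden : 0 < ε / 2 - lam' := by linarith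
      set m₁ : ℕ := max m (⌈c₀⌉₊ + 1) with hm₁def
      have hym := Set.mem_iInter.mp hy m₁
      obtain ⟨q, hq1, hq2⟩ := hym
      have hq0 : (0:ℝ) ≤ (q:ℝ) := le_trans (by positivity) hq1
      set n : ℕ := ⌈(q:ℝ)⌉₊ with hndef
      have hqn : (q : ℝ) ≤ n := Nat.le_ceil _
      have hm₁n : m₁ ≤ n := by
        have : (m₁ : ℝ) ≤ (n : ℝ) := le_trans hq1 hqn
        exact_mod_cast this
      have hnm : m ≤ n := le_trans (le_max_left _ _) hm₁n
      have hnc₀ : c₀ < n := by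
        have h1 : (⌈c₀⌉₊ + 1 : ℕ) ≤ n := le_trans (le_max_right _ _) hm₁n
        have h2 : c₀ ≤ (⌈c₀⌉₊ : ℝ) := Nat.le_ceil _
        have h3 : ((⌈c₀⌉₊ + 1 : ℕ) : ℝ) ≤ (n : ℝ) := by exact_mod_cast h1
        push_cast at h3
        linarith
      have hkey : lam' * n ≤ ε * ((n : ℝ) - 1) / 2 := by
        have h1 : c₀ * (ε / 2 - lam') = ε / 2 := by
          rw [hc₀def]; exact div_mul_cancel₀ _ (ne_of_gt hden)
        nlinarith [hnc₀, hden]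
      have hne1 : (q : ℝ) > (n : ℝ) - 1 := by
        have := Nat.ceil_lt_add_one hq0
        rw [← hndef] at this
        linarith
      refine ⟨n, hnm, ?_⟩
      have hnne : (n : ℝ≥0∞) ≠ 0 := by
        have : 0 < n := lt_of_lt_of_le (Nat.succ_pos _) (le_trans (le_max_right _ _) hm₁n)
        exact_mod_cast this.ne'
      rw [ENNReal.le_div_iff_mul_le (Or.inl hnne) (Or.inl (ENNReal.natCast_ne_top n))]
      have hchain : ENNReal.ofReal (lam' * n) ≤ visitTime T V y 0 n := by
        have h1 : ENNReal.ofReal (lam' * n) ≤ ENNReal.ofReal (ε * ((n:ℝ) - 1) / 2) :=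
          ENNReal.ofReal_le_ofReal hkey
        have h2 : ENNReal.ofReal (ε * ((n:ℝ) - 1) / 2) ≤ ENNReal.ofReal (ε * q / 2) :=
          ENNReal.ofReal_le_ofReal (by nlinarith)
        have h3 : visitTime T V y 0 q ≤ visitTime T V y 0 n := visitTime_mono y hqn
        exact le_trans h1 (le_trans h2 (le_trans hq2.le h3))
      calc ENNReal.ofReal lam' * (n : ℝ≥0∞) = ENNReal.ofReal (lam' * n) := by
            rw [ENNReal.ofReal_mul hlam'0.le, ENNReal.ofReal_natCast]
        _ ≤ visitTime T V y 0 n := hchain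
    calc ENNReal.ofReal lam < ENNReal.ofReal lam' :=
          (ENNReal.ofReal_lt_ofReal_iff hlam'0).mpr hlam'1
      _ ≤ orbitLimsup T V y := le_limsup_of_frequently_le' hfreq
  have hNullInter : μ (⋂ n, Bad n) = 0 := measure_mono_null hInter hnull
  have hten := tendsto_measure_iInter_atTop
    (fun n => (hBadm n).nullMeasurableSet) hBadAnti ⟨0, measure_ne_top μ _⟩
  rw [show (μ ∘ Bad) = fun n => μ (Bad n) from rfl, hNullInter] at hten
  set cm : ℝ := min (ε ^ 2) 1 with hcmdef
  have hcm0 : 0 < cm := by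
    rw [hcmdef]; exact lt_min (by positivity) one_pos
  have hcm1 : cm ≤ 1 := min_le_right _ _
  have hcmε : cm ≤ ε ^ 2 := min_le_left _ _
  have hδ : (0 : ℝ≥0∞) < ENNReal.ofReal (cm / 2) := ENNReal.ofReal_pos.mpr (by linarith)
  obtain ⟨n₀, hn₀⟩ := (hten.eventually_lt_const hδ).exists
  set m : ℕ := max n₀ 1 with hmdef
  have hmlt : μ (Bad m) < ENNReal.ofReal (cm / 2) :=
    lt_of_le_of_lt (measure_mono (hBadAnti (le_max_left n₀ 1))) hn₀
  refine ⟨(Bad m)ᶜ, (m : ℝ), (hBadm m).compl, ?_, ?_, ?_⟩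
  · -- measure bound
    by_contra hcon
    push_neg at hcon
    have hcontr : (1 : ℝ≥0∞) < 1 := by
      calc (1 : ℝ≥0∞) = μ (Bad m) + μ (Bad m)ᶜ := by
            rw [measure_add_measure_compl (hBadm m), measure_univ]
        _ ≤ μ (Bad m) + ENNReal.ofReal (1 - ε ^ 2) := add_le_add_right hcon _
        _ < ENNReal.ofReal (cm / 2) + ENNReal.ofReal (1 - ε ^ 2) :=
            ENNReal.add_lt_add_right ENNReal.ofReal_ne_top hmlt
        _ ≤ ENNReal.ofReal (cm / 2) + ENNReal.ofReal (1 - cm) :=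
            add_le_add_right (ENNReal.ofReal_le_ofReal (by linarith)) _
        _ = ENNReal.ofReal (1 - cm / 2) := by
            rw [← ENNReal.ofReal_add (by linarith) (by linarith)]
            ring_nf
        _ ≤ 1 := ENNReal.ofReal_le_one.mpr (by linarith)
    exact absurd hcontr (lt_irrefl 1)
  · -- positivity of N
    have : (1 : ℕ) ≤ m := le_max_right _ _
    exact_mod_cast Nat.lt_of_lt_of_le Nat.zero_lt_one this
  · -- the visit bound
    intro y hyD R hR
    by_contra hcon
    push_neg at hcon
    have hm1 : (1 : ℝ) ≤ (m : ℝ) := by exact_mod_cast le_max_right n₀ 1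
    have hR1 : (1 : ℝ) ≤ R := le_trans hm1 hR
    have hcon' : ENNReal.ofReal (ε * R / 2) < visitTime T V y 0 R := hcon
    have hfin : visitTime T V y 0 R ≠ ⊤ :=
      ((visitTime_le_length y 0 R).trans_lt ENNReal.ofReal_lt_top).ne
    set a : ℝ := (visitTime T V y 0 R).toReal with hadef
    have ha : ε * R / 2 < a :=
      (ENNReal.ofReal_lt_iff_lt_toReal (by positivity) hfin).mp hcon'
    have ha0 : 0 < a := lt_of_le_of_lt (by positivity) ha
    have hRlt : R < 2 * a / ε := by
      rw [lt_div_iff₀ hε]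
      nlinarith
    obtain ⟨q, hq1, hq2⟩ := exists_rat_btwn hRlt
    have hyBad : y ∈ Bad m := by
      refine ⟨q, le_trans hR hq1.le, ?_⟩
      have h1 : visitTime T V y 0 R ≤ visitTime T V y 0 q := visitTime_mono y hq1.le
      have h3 : (q : ℝ) * ε < 2 * a := (lt_div_iff₀ hε).mp hq2
      have h2 : ENNReal.ofReal (ε * q / 2) < ENNReal.ofReal a :=
        (ENNReal.ofReal_lt_ofReal_iff ha0).mpr (by nlinarith)
      rw [← ENNReal.ofReal_toReal hfin, ← hadef] at h1
      exact lt_of_lt_of_le h2 h1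
    exact hyD hyBad
end

section
/- Let T be a flow on a set X preserving a probability measure μ, let P : X → ι be a map into a finite index type, let R > 1, 0 < ε ≤ 1/10, and c > 0. For x ∈ X and δ > 0 let B_R(x, δ) = {y ∈ X : I_R(x) and I_R(y) are (δ,P)-matchable}, and assume each such set is measurable. If μ(B_R(x, ε)) ≥ c for every x ∈ X, then there exist finitely many points x_1, …, x_n ∈ X with n ≤ ⌊1/c⌋ such that X = ⋃_{i=1}^n B_R(x_i, 10ε). -/
open MeasureTheory Set ENNReal NNReal

lemma lipVol {K : ℝ≥0} {f : ℝ → ℝ} {s : Set ℝ}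
    (h : LipschitzOnWith K f s) : volume (f '' s) ≤ (K : ℝ≥0∞) * volume s := by
  have := h.hausdorffMeasure_image_le (d := 1) zero_le_one
  simpa [MeasureTheory.hausdorffMeasure_real, ENNReal.rpow_one] using this

lemma bilip_basic {ε : ℝ} (hε : 0 < ε) (hε1 : ε < 1) {B : Set ℝ} {f : ℝ → ℝ}
    (hbilip : ∀ s ∈ B, ∀ t ∈ B, s ≤ t →
      (1 - ε) * (t - s) ≤ f t - f s ∧ f t - f s ≤ (1 + ε) * (t - s)) :
    Set.InjOn f B ∧ LipschitzOnWith (1 + ε).toNNReal f B ∧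
      LipschitzOnWith ((1 - ε)⁻¹).toNNReal (Function.invFunOn f B) (f '' B) := by
  have h1ε : (0:ℝ) < 1 - ε := by linarith
  have hinj : Set.InjOn f B := by
    intro a ha b hb hab
    rcases le_total a b with h | h
    · have := (hbilip a ha b hb h).1; nlinarith
    · have := (hbilip b hb a ha h).1; nlinarith
  refine ⟨hinj, ?_, ?_⟩
  · rw [lipschitzOnWith_iff_dist_le_mul]
    intro a ha b hb
    rw [Real.coe_toNNReal _ (by linarith), Real.dist_eq, Real.dist_eq]
    rcases le_total a b with h | h
    · have := hbilip a ha b hb h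
      rw [abs_of_nonpos (by nlinarith [this.1]), abs_of_nonpos (by linarith)]
      nlinarith [this.2]
    · have := hbilip b hb a ha h
      rw [abs_of_nonneg (by nlinarith [this.1]), abs_of_nonneg (by linarith)]
      nlinarith [this.2]
  · rw [lipschitzOnWith_iff_dist_le_mul]
    rintro u ⟨a, ha, rfl⟩ v ⟨b, hb, rfl⟩
    rw [Real.coe_toNNReal _ (by positivity), Real.dist_eq, Real.dist_eq]
    set ga := Function.invFunOn f B (f a) with hga
    set gb := Function.invFunOn f B (f b) with hgb
    have hgaB : ga ∈ B := Function.invFunOn_apply_mem ha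
    have hgbB : gb ∈ B := Function.invFunOn_apply_mem hb
    have hgaf : f ga = f a := Function.invFunOn_apply_eq ha
    have hgbf : f gb = f b := Function.invFunOn_apply_eq hb
    have hKK : (1 - ε)⁻¹ * (1 - ε) = 1 := inv_mul_cancel₀ h1ε.ne'
    have hKpos : (0:ℝ) < (1 - ε)⁻¹ := by positivity
    rcases le_total ga gb with h | h
    · have := (hbilip ga hgaB gb hgbB h).1
      rw [hgaf, hgbf] at this
      rw [abs_of_nonpos (by linarith), abs_of_nonpos (by nlinarith)]
      nlinarith
    · have := (hbilip gb hgbB ga hgaB h).1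
      rw [hgaf, hgbf] at this
      rw [abs_of_nonneg (by linarith), abs_of_nonneg (by nlinarith)]
      nlinarith

lemma matchable_comp {X ι : Type*} {T : ℝ → X → X} {P : X → ι} {R ε : ℝ}
    (hR : 0 < R) (hε : 0 < ε) (hε' : ε ≤ 1 / 10) {x y z : X}
    (hxz : Matchable T P R ε x z) (hyz : Matchable T P R ε y z) :
    Matchable T P R (10 * ε) x y := by
  obtain ⟨A, ψ, mA, Asub, volA, ψmem, ψbil, volψA, ψlab⟩ := hxz
  obtain ⟨C, χ, mC, Csub, volC, χmem, χbil, volχC, χlab⟩ := hyz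
  have hε1 : ε < 1 := by linarith
  have h1ε : (0:ℝ) < 1 - ε := by linarith
  obtain ⟨ψinj, ψlip, ψinvlip⟩ := bilip_basic hε hε1 ψbil
  obtain ⟨χinj, χlip, χinvlip⟩ := bilip_basic hε hε1 χbil
  set D := χ '' C with hD
  have mD : MeasurableSet D := mC.image_of_continuousOn_injOn χlip.continuousOn χinj
  have mψA : MeasurableSet (ψ '' A) := mA.image_of_continuousOn_injOn ψlip.continuousOn ψinj
  set φ := Function.invFunOn χ C with hφ
  have φmem : ∀ u ∈ D, φ u ∈ C := by
    rintro u ⟨d, hd, rfl⟩; exact Function.invFunOn_apply_mem hd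
  have φeq : ∀ u ∈ D, χ (φ u) = u := by
    rintro u ⟨d, hd, rfl⟩; exact Function.invFunOn_apply_eq hd
  obtain ⟨g, glip, hg⟩ := ψlip.extend_real
  set E := A ∩ ψ ⁻¹' D with hE
  have hEA : E ⊆ A := inter_subset_left
  have mE : MeasurableSet E := by
    have : E = A ∩ g ⁻¹' D := by
      ext t
      simp only [hE, mem_inter_iff, mem_preimage]
      exact ⟨fun ⟨h1, h2⟩ => ⟨h1, by rwa [← hg h1]⟩, fun ⟨h1, h2⟩ => ⟨h1, by rwa [hg h1]⟩⟩
    rw [this]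
    exact mA.inter (glip.continuous.measurable mD)
  -- the key coefficient bound
  have hK2 : ((1 - ε)⁻¹ : ℝ) ≤ 2 := by
    have h := inv_mul_cancel₀ h1ε.ne'
    nlinarith [inv_nonneg.mpr h1ε.le]
  -- complements have small measure
  have Dsub : D ⊆ Icc 0 R := by rintro u ⟨d, hd, rfl⟩; exact χmem d hd
  have ψAsub : ψ '' A ⊆ Icc 0 R := by rintro u ⟨t, ht, rfl⟩; exact ψmem t ht
  have small : ∀ S : Set ℝ, MeasurableSet S → S ⊆ Icc 0 R →
      ENNReal.ofReal ((1 - ε) * R) < volume S →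
      volume (Icc (0:ℝ) R \ S) ≤ ENNReal.ofReal (ε * R) := by
    intro S mS hSsub hvS
    have h1 : volume (Icc (0:ℝ) R \ S) = volume (Icc (0:ℝ) R) - volume S :=
      measure_diff hSsub mS.nullMeasurableSet ((measure_mono hSsub).trans_lt measure_Icc_lt_top).ne
    rw [h1, Real.volume_Icc, sub_zero]
    calc ENNReal.ofReal R - volume S ≤ ENNReal.ofReal R - ENNReal.ofReal ((1 - ε) * R) :=
          tsub_le_tsub_left hvS.le _
      _ = ENNReal.ofReal (ε * R) := by
          rw [← ENNReal.ofReal_sub _ (mul_nonneg h1ε.le hR.le)]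
          congr 1; ring
  -- Lipschitz image bound specialized
  have lipbd : ∀ (h : ℝ → ℝ) (S : Set ℝ), LipschitzOnWith ((1 - ε)⁻¹).toNNReal h S →
      volume S ≤ ENNReal.ofReal (ε * R) → volume (h '' S) ≤ ENNReal.ofReal (2 * (ε * R)) := by
    intro h S hlip hvol
    calc volume (h '' S) ≤ (((1 - ε)⁻¹).toNNReal : ENNReal) * volume S := lipVol hlip
      _ ≤ ENNReal.ofReal ((1 - ε)⁻¹) * ENNReal.ofReal (ε * R) := by
          exact mul_le_mul_right hvol _
      _ ≤ ENNReal.ofReal (2 * (ε * R)) := by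
          rw [← ENNReal.ofReal_mul (by positivity)]
          exact ENNReal.ofReal_le_ofReal
            (mul_le_mul_of_nonneg_right hK2 (by positivity))
  -- bad set for the domain
  have badE : volume (A \ E) ≤ ENNReal.ofReal (2 * (ε * R)) := by
    have hsub : A \ E ⊆ Function.invFunOn ψ A '' (ψ '' (A \ E)) := by
      intro t ht
      exact ⟨ψ t, mem_image_of_mem _ ht, ψinj.leftInvOn_invFunOn ht.1⟩
    have himg : ψ '' (A \ E) ⊆ Icc 0 R \ D := by
      rintro u ⟨t, ⟨htA, htE⟩, rfl⟩
      exact ⟨ψmem t htA, fun hDm => htE ⟨htA, hDm⟩⟩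
    refine (measure_mono hsub).trans (lipbd _ _ (ψinvlip.mono (image_mono diff_subset)) ?_)
    exact (measure_mono himg).trans (small D mD Dsub volχC)
  -- volume of E
  have volE : ENNReal.ofReal ((1 - 10 * ε) * R) < volume E := by
    by_contra hcon
    push_neg at hcon
    have hA : volume A ≤ volume E + volume (A \ E) := by
      refine (measure_mono (fun t ht => ?_)).trans (measure_union_le E (A \ E))
      by_cases h : t ∈ E
      · exact Or.inl h
      · exact Or.inr ⟨ht, h⟩
    have : volume A ≤ ENNReal.ofReal ((1 - ε) * R) := by
      calc volume A ≤ ENNReal.ofReal ((1 - 10 * ε) * R) + ENNReal.ofReal (2 * (ε * R)) :=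
            hA.trans (add_le_add hcon badE)
        _ = ENNReal.ofReal ((1 - 10 * ε) * R + 2 * (ε * R)) := by
            rw [← ENNReal.ofReal_add (by nlinarith) (by positivity)]
        _ ≤ ENNReal.ofReal ((1 - ε) * R) := ENNReal.ofReal_le_ofReal (by nlinarith)
    exact absurd volA (not_lt.mpr this)
  -- image of E
  have ψE : ψ '' E = ψ '' A ∩ D := by
    apply Subset.antisymm
    · rintro u ⟨t, ⟨htA, htD⟩, rfl⟩; exact ⟨mem_image_of_mem _ htA, htD⟩
    · rintro u ⟨⟨t, htA, rfl⟩, htD⟩; exact ⟨t, ⟨htA, htD⟩, rfl⟩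
  have covC : C ⊆ φ '' (ψ '' E) ∪ φ '' (D \ ψ '' A) := by
    intro d hd
    have hu : χ d ∈ D := mem_image_of_mem _ hd
    have hφd : φ (χ d) = d := χinj.leftInvOn_invFunOn hd
    by_cases hψm : χ d ∈ ψ '' A
    · exact Or.inl ⟨χ d, by rw [ψE]; exact ⟨hψm, hu⟩, hφd⟩
    · exact Or.inr ⟨χ d, ⟨hu, hψm⟩, hφd⟩
  have badC : volume (φ '' (D \ ψ '' A)) ≤ ENNReal.ofReal (2 * (ε * R)) := by
    refine lipbd _ _ (χinvlip.mono diff_subset) ?_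
    have hsub2 : D \ ψ '' A ⊆ Icc 0 R \ ψ '' A := fun u hu => ⟨Dsub hu.1, hu.2⟩
    exact (measure_mono hsub2).trans (small (ψ '' A) mψA ψAsub volψA)
  have volim : ENNReal.ofReal ((1 - 10 * ε) * R) < volume ((φ ∘ ψ) '' E) := by
    rw [image_comp]
    by_contra hcon
    push_neg at hcon
    have : volume C ≤ ENNReal.ofReal ((1 - ε) * R) := by
      calc volume C ≤ volume (φ '' (ψ '' E)) + volume (φ '' (D \ ψ '' A)) :=
            (measure_mono covC).trans (measure_union_le _ _)
        _ ≤ ENNReal.ofReal ((1 - 10 * ε) * R) + ENNReal.ofReal (2 * (ε * R)) :=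
            add_le_add hcon badC
        _ = ENNReal.ofReal ((1 - 10 * ε) * R + 2 * (ε * R)) := by
            rw [← ENNReal.ofReal_add (by nlinarith) (by positivity)]
        _ ≤ ENNReal.ofReal ((1 - ε) * R) := ENNReal.ofReal_le_ofReal (by nlinarith)
    exact absurd volC (not_lt.mpr this)
  -- bi-Lipschitz property of the composition
  have θbil : ∀ s ∈ E, ∀ t ∈ E, s ≤ t →
      (1 - 10 * ε) * (t - s) ≤ (φ ∘ ψ) t - (φ ∘ ψ) s ∧
        (φ ∘ ψ) t - (φ ∘ ψ) s ≤ (1 + 10 * ε) * (t - s) := by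
    intro s hs t ht hst
    have h1 := ψbil s hs.1 t ht.1 hst
    have hφs := φmem _ hs.2
    have hφseq := φeq _ hs.2
    have hφt := φmem _ ht.2
    have hφteq := φeq _ ht.2
    have hφle : φ (ψ s) ≤ φ (ψ t) := by
      by_contra hlt
      push_neg at hlt
      have h2 := (χbil _ hφt _ hφs hlt.le).1
      rw [hφseq, hφteq] at h2
      nlinarith [h1.1]
    have h2 := χbil _ hφs _ hφt hφle
    rw [hφseq, hφteq] at h2
    have hts : (0:ℝ) ≤ t - s := by linarith
    have hφts : (0:ℝ) ≤ φ (ψ t) - φ (ψ s) := by linarith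
    constructor
    · show (1 - 10 * ε) * (t - s) ≤ φ (ψ t) - φ (ψ s)
      nlinarith [h1.1, h2.2, mul_nonneg hε.le hts, mul_nonneg (mul_nonneg hε.le hε.le) hts]
    · show φ (ψ t) - φ (ψ s) ≤ (1 + 10 * ε) * (t - s)
      nlinarith [h1.2, h2.1, mul_nonneg hε.le hts, mul_nonneg (mul_nonneg hε.le hε.le) hts,
        mul_nonneg hε.le hφts]
  refine ⟨E, φ ∘ ψ, mE, fun t ht => Asub (hEA ht), volE, fun t ht => Csub (φmem _ ht.2),
    θbil, volim, fun t ht => ?_⟩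
  have hχl := χlab _ (φmem _ ht.2)
  rw [φeq _ ht.2] at hχl
  exact (ψlab t ht.1).trans hχl.symm

/-- Covering criterion for standardness: if every `(R,ε)`-matching ball has
measure at least `c`, then `X` is covered by at most `⌊1/c⌋` matching balls of
radius `10ε`. -/
theorem cover_by_matching_balls {X ι : Type*} [Finite ι] [MeasurableSpace X]
    (μ : Measure X) [IsProbabilityMeasure μ]
    (T : ℝ → X → X) (hT0 : ∀ x, T 0 x = x)
    (hTadd : ∀ s t x, T (s + t) x = T s (T t x))
    (hTpres : ∀ (t : ℝ) (S : Set X), MeasurableSet S → μ (T t ⁻¹' S) = μ S)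
    (P : X → ι) (R ε c : ℝ) (hR : 1 < R) (hε : 0 < ε) (hε' : ε ≤ 1 / 10)
    (hc : 0 < c)
    (hmeas : ∀ (x : X) (δ : ℝ), 0 < δ → MeasurableSet {y | Matchable T P R δ x y})
    (hball : ∀ x : X, ENNReal.ofReal c ≤ μ {y | Matchable T P R ε x y}) :
    ∃ (n : ℕ) (x : Fin n → X), n ≤ ⌊1 / c⌋₊ ∧
      (⋃ i, {y | Matchable T P R (10 * ε) (x i) y}) = Set.univ := by
  classical
  have hR0 : (0:ℝ) < R := by linarith
  set ball : X → Set X := fun a => {y | Matchable T P R ε a y} with hballdef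
  have hmb : ∀ a, MeasurableSet (ball a) := fun a => hmeas a ε hε
  have cardbd : ∀ s : Finset X,
      (↑s : Set X).Pairwise (fun a b => Disjoint (ball a) (ball b)) → s.card ≤ ⌊1 / c⌋₊ := by
    intro s hs
    have h1 : ∑ a ∈ s, μ (ball a) = μ (⋃ a ∈ s, ball a) :=
      (measure_biUnion_finset hs (fun a _ => hmb a)).symm
    have h2 : (s.card : ENNReal) * ENNReal.ofReal c ≤ 1 := by
      calc (s.card : ENNReal) * ENNReal.ofReal c = ∑ _a ∈ s, ENNReal.ofReal c := by
            rw [Finset.sum_const, nsmul_eq_mul]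
        _ ≤ ∑ a ∈ s, μ (ball a) := Finset.sum_le_sum fun a _ => hball a
        _ = μ (⋃ a ∈ s, ball a) := h1
        _ ≤ 1 := prob_le_one
    have h3 : (s.card : ℝ) * c ≤ 1 := by
      rw [← ENNReal.ofReal_natCast s.card, ← ENNReal.ofReal_mul (by positivity),
        ← ENNReal.ofReal_one] at h2
      exact (ENNReal.ofReal_le_ofReal_iff (by norm_num)).1 h2
    exact Nat.le_floor (by rw [le_div_iff₀ hc]; linarith)
  set Pn : ℕ → Prop := fun n => ∃ s : Finset X,
    (↑s : Set X).Pairwise (fun a b => Disjoint (ball a) (ball b)) ∧ s.card = n with hPn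
  have hP0 : Pn 0 := ⟨∅, by simp, rfl⟩
  obtain ⟨s, hs, hscard⟩ :=
    Nat.findGreatest_spec (P := Pn) (n := ⌊1 / c⌋₊) (Nat.zero_le _) hP0
  have hsmax : ∀ t : Finset X,
      (↑t : Set X).Pairwise (fun a b => Disjoint (ball a) (ball b)) → t.card ≤ s.card := by
    intro t ht
    rw [hscard]
    exact Nat.le_findGreatest (cardbd t ht) ⟨t, ht, rfl⟩
  refine ⟨s.card, fun i => (s.equivFin.symm i : X), cardbd s hs, ?_⟩
  apply eq_univ_of_forall
  intro y
  simp only [mem_iUnion, mem_setOf_eq]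
  have key : ∃ a ∈ s, ∃ z, Matchable T P R ε a z ∧ Matchable T P R ε y z := by
    by_cases hy : y ∈ s
    · have hne : (ball y).Nonempty :=
        nonempty_of_measure_ne_zero ((lt_of_lt_of_le (ENNReal.ofReal_pos.mpr hc) (hball y)).ne')
      obtain ⟨z, hz⟩ := hne
      exact ⟨y, hy, z, hz, hz⟩
    · by_cases hins : (↑(insert y s) : Set X).Pairwise (fun a b => Disjoint (ball a) (ball b))
      · exfalso
        have := hsmax _ hins
        rw [Finset.card_insert_of_notMem hy] at this
        omega
      · rw [Finset.coe_insert, Set.pairwise_insert] at hins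
        push_neg at hins
        obtain ⟨b, hb, hby, hnd⟩ := hins hs
        have : ¬ Disjoint (ball y) (ball b) := fun hd => hnd hd hd.symm
        obtain ⟨z, hzy, hzb⟩ := Set.not_disjoint_iff.1 this
        exact ⟨b, hb, z, hzb, hzy⟩
  obtain ⟨a, ha, z, haz, hyz⟩ := key
  refine ⟨s.equivFin ⟨a, ha⟩, ?_⟩
  have hxa : ((s.equivFin.symm (s.equivFin ⟨a, ha⟩)) : X) = a := by
    rw [Equiv.symm_apply_apply]
  rw [hxa]
  exact matchable_comp hR0 hε hε' haz hyz
end
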